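/- For all ε, δ > 0, the Lebesgue measure of the set of points of [0,1] mapped outside the unit interval by F(·; ε, δ) equals ℓ(ε) + ℓ(δ), where ℓ(x) = x(3 + x)/(2(x + 2)(x + 4)); that is, λ({x ∈ [0,1] : F(x; ε, δ) ∉ [0,1]}) = ε(3 + ε)/(2(ε + 2)(ε + 4)) + δ(3 + δ)/(2(δ + 2)(δ + 4)). -/
import Mathlib


open MeasureTheory Set Filter

/-- The piecewise linear map `F(·; ε, δ)` of Example 2.3 on `[0,1]`. -/
noncomputable def Fpiece (ε δ y : ℝ) : ℝ :=
  if y < 1 / 4 then (4 + ε) * y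
  else if y < 1 / 2 then (-2 - ε) * y + (3 + ε) / 2
  else if y < 3 / 4 then (-2 - δ) * y + (3 + δ) / 2
  else (4 + δ) * y - (3 + δ)

/-- The shift-periodic map `F(x; ε, δ) = F({x}; ε, δ) + ⌊x⌋` on `ℝ`. -/
noncomputable def Fmap (ε δ x : ℝ) : ℝ := (⌊x⌋ : ℝ) + Fpiece ε δ (Int.fract x)

/-- The restricted map `F_r(x; ε, δ) = {F(x; ε, δ)}`. -/
noncomputable def FrMap (ε δ x : ℝ) : ℝ := Int.fract (Fmap ε δ x)

lemma Fmap_eq_Fpiece (ε δ x : ℝ) (h0 : 0 ≤ x) (h1 : x < 1) :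
    Fmap ε δ x = Fpiece ε δ x := by
  have hf : Int.fract x = x := Int.fract_eq_self.2 ⟨h0, h1⟩
  have hfl : ⌊x⌋ = 0 := Int.floor_eq_zero_iff.2 ⟨h0, h1⟩
  simp [Fmap, hf, hfl]

set_option maxHeartbeats 800000 in
/-- **Equation (4.2).** For all `ε, δ > 0` the Lebesgue measure of the set of points of `[0,1]`
mapped outside the unit interval by `F(·; ε, δ)` equals `ℓ(ε) + ℓ(δ)` where
`ℓ(x) = x(3+x)/(2(x+2)(x+4))`. -/
theorem measure_escape_set (ε δ : ℝ) (hε : 0 < ε) (hδ : 0 < δ) :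
    volume {x ∈ Set.Icc (0 : ℝ) 1 | Fmap ε δ x ∉ Set.Icc (0 : ℝ) 1}
      = ENNReal.ofReal
          (ε * (3 + ε) / (2 * (ε + 2) * (ε + 4)) + δ * (3 + δ) / (2 * (δ + 2) * (δ + 4))) := by
  obtain ⟨a1, ha1def⟩ : ∃ a : ℝ, a = 1 / (4 + ε) := ⟨_, rfl⟩
  obtain ⟨b1, hb1def⟩ : ∃ b : ℝ, b = (1 + ε) / (2 * (2 + ε)) := ⟨_, rfl⟩
  obtain ⟨a2, ha2def⟩ : ∃ a : ℝ, a = (3 + δ) / (2 * (2 + δ)) := ⟨_, rfl⟩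
  obtain ⟨b2, hb2def⟩ : ∃ b : ℝ, b = (3 + δ) / (4 + δ) := ⟨_, rfl⟩
  have h4ε : (0:ℝ) < 4 + ε := by linarith
  have h2ε : (0:ℝ) < 2 * (2 + ε) := by linarith
  have h4δ : (0:ℝ) < 4 + δ := by linarith
  have h2δ : (0:ℝ) < 2 * (2 + δ) := by linarith
  have ha1 : (4 + ε) * a1 = 1 := by rw [ha1def]; field_simp
  have hb1 : (2 * (2 + ε)) * b1 = 1 + ε := by rw [hb1def]; field_simp
  have ha2 : (2 * (2 + δ)) * a2 = 3 + δ := by rw [ha2def]; field_simp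
  have hb2 : (4 + δ) * b2 = 3 + δ := by rw [hb2def]; field_simp
  have ha1pos : 0 < a1 := by rw [ha1def]; positivity
  have ha1q : a1 < 1 / 4 := by
    rw [ha1def, div_lt_div_iff₀ h4ε (by norm_num)]; linarith
  have hqb1 : (1:ℝ) / 4 < b1 := by
    rw [hb1def, div_lt_div_iff₀ (by norm_num) h2ε]; linarith
  have hb1h : b1 < 1 / 2 := by
    rw [hb1def, div_lt_div_iff₀ h2ε (by norm_num)]; linarith
  have hha2 : (1:ℝ) / 2 < a2 := by
    rw [ha2def, div_lt_div_iff₀ (by norm_num) h2δ]; linarith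
  have ha2t : a2 < 3 / 4 := by
    rw [ha2def, div_lt_div_iff₀ h2δ (by norm_num)]; linarith
  have htb2 : (3:ℝ) / 4 < b2 := by
    rw [hb2def, div_lt_div_iff₀ (by norm_num) h4δ]; linarith
  have hb21 : b2 < 1 := by
    rw [hb2def, div_lt_one h4δ]; linarith
  have hset : {x ∈ Set.Icc (0 : ℝ) 1 | Fmap ε δ x ∉ Set.Icc (0 : ℝ) 1}
      = Ioo a1 b1 ∪ Ioo a2 b2 := by
    ext x
    simp only [mem_setOf_eq, mem_Icc, mem_union, mem_Ioo, not_and_or, not_le]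
    constructor
    · rintro ⟨⟨hx0, hx1⟩, hout⟩
      have hxlt1 : x < 1 := by
        rcases lt_or_eq_of_le hx1 with h | h
        · exact h
        · exfalso
          subst h
          have hF : Fmap ε δ 1 = 1 := by
            norm_num [Fmap, Fpiece, Int.fract_one]
          rw [hF] at hout
          rcases hout with h | h <;> linarith
      rw [Fmap_eq_Fpiece ε δ x hx0 hxlt1] at hout
      unfold Fpiece at hout
      split_ifs at hout with h1 h2 h3
      · rcases hout with h | h
        · exact absurd h (not_lt.2 (mul_nonneg h4ε.le hx0))
        · left
          refine ⟨?_, by linarith⟩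
          nlinarith [ha1]
      · rcases hout with h | h
        · exfalso; nlinarith [mul_lt_mul_of_pos_left h2 (show (0:ℝ) < 2 + ε by linarith)]
        · left
          refine ⟨by linarith, ?_⟩
          nlinarith [hb1]
      · rcases hout with h | h
        · right
          refine ⟨?_, by linarith⟩
          nlinarith [ha2]
        · exfalso
          push_neg at h1 h2
          nlinarith [mul_le_mul_of_nonneg_left h2 (show (0:ℝ) ≤ 2 + δ by linarith)]
      · push_neg at h1 h2 h3
        rcases hout with h | h
        · right
          refine ⟨by linarith, ?_⟩
          nlinarith [hb2]
        · exfalso; nlinarith [mul_lt_mul_of_pos_left hxlt1 h4δ]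
    · rintro (⟨hl, hr⟩ | ⟨hl, hr⟩)
      · have hx0 : 0 ≤ x := by linarith
        have hx1 : x < 1 := by linarith
        refine ⟨⟨hx0, le_of_lt hx1⟩, ?_⟩
        rw [Fmap_eq_Fpiece ε δ x hx0 hx1]
        unfold Fpiece
        split_ifs with h1 h2 h3
        · right
          nlinarith [ha1]
        · right; nlinarith [mul_lt_mul_of_pos_left hr h2ε, hb1]
        · exfalso; linarith
        · exfalso; push_neg at h3; linarith
      · have hx0 : 0 ≤ x := by linarith
        have hx1 : x < 1 := by linarith
        refine ⟨⟨hx0, le_of_lt hx1⟩, ?_⟩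
        rw [Fmap_eq_Fpiece ε δ x hx0 hx1]
        unfold Fpiece
        split_ifs with h1 h2 h3
        · exfalso; linarith
        · exfalso; linarith
        · left; nlinarith [mul_lt_mul_of_pos_left hl h2δ, ha2]
        · left; nlinarith [mul_lt_mul_of_pos_left hr h4δ, hb2]
  rw [hset]
  have hdisj : Disjoint (Ioo a1 b1) (Ioo a2 b2) := by
    rw [Set.disjoint_left]
    rintro x ⟨_, hb⟩ ⟨ha, _⟩
    linarith
  rw [measure_union hdisj measurableSet_Ioo, Real.volume_Ioo, Real.volume_Ioo]
  have e1 : b1 - a1 = ε * (3 + ε) / (2 * (ε + 2) * (ε + 4)) := by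
    rw [hb1def, ha1def]; field_simp; ring
  have e2 : b2 - a2 = δ * (3 + δ) / (2 * (δ + 2) * (δ + 4)) := by
    rw [hb2def, ha2def]; field_simp; ring
  rw [e1, e2, ENNReal.ofReal_add (by positivity) (by positivity)]
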